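/- Let N ≥ 2 be an integer and α > −2 a real number with N > 10 + 4α, and let γ be a real number with γ(N,α) ≤ γ < 0, where γ(N,α) := 2 − N/2 + α/2 + √((α+2)(α+2N−2))/2. Then (−γ + α + 2)·(γ + N − 2) ≤ (N−2)²/4. -/
import Mathlib

open MeasureTheory Set

/-- If `N > 10 + 4α` and `γ(N,α) ≤ γ < 0`, then `(-γ+α+2)(γ+N-2) ≤ (N-2)²/4`. -/
theorem hardy_constant_bound (N : ℕ) (α γ : ℝ) (hN : 2 ≤ N) (hα : -2 < α)
    (hdim : (N : ℝ) > 10 + 4 * α)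
    (hγ₁ : 2 - (N : ℝ) / 2 + α / 2 +
      Real.sqrt ((α + 2) * (α + 2 * (N : ℝ) - 2)) / 2 ≤ γ)
    (hγ₂ : γ < 0) :
    (-γ + α + 2) * (γ + (N : ℝ) - 2) ≤ ((N : ℝ) - 2) ^ 2 / 4 := by
  have hN2 : (2 : ℝ) ≤ (N : ℝ) := by exact_mod_cast hN
  set s := Real.sqrt ((α + 2) * (α + 2 * (N : ℝ) - 2)) with hs
  have hnn : 0 ≤ (α + 2) * (α + 2 * (N : ℝ) - 2) := by nlinarith
  have hs2 : s ^ 2 = (α + 2) * (α + 2 * (N : ℝ) - 2) := Real.sq_sqrt hnn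
  have hs0 : 0 ≤ s := Real.sqrt_nonneg _
  have hge : γ - (α + 4 - (N : ℝ)) / 2 ≥ s / 2 := by linarith
  nlinarith [sq_nonneg (γ - (α + 4 - (N : ℝ)) / 2 - s / 2), sq_nonneg (γ - (α + 4 - (N : ℝ)) / 2 + s / 2)]
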